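/- arXiv:2404.08442 — 2 statements merged into one kernel-verified Lean document; each statement's English description precedes it below -/
import Mathlib

section
/- Let A be a symmetric positive definite d×d real matrix and 0 ≤ μ < 1. If |A|²/(tr A)² ≤ 1/(d − μ²) (Frobenius norm), then with γ = tr A / |A|² one has |γA − I_d| ≤ μ. -/
noncomputable def frobSq {d : ℕ} (A : Matrix (Fin d) (Fin d) ℝ) : ℝ := ∑ i, ∑ j, (A i j) ^ 2

lemma frob_expand {d : ℕ} (A : Matrix (Fin d) (Fin d) ℝ) (c : ℝ) :
    frobSq (c • A - 1) = c ^ 2 * frobSq A - 2 * c * Matrix.trace A + d := by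
  unfold frobSq
  have h : ∀ i j : Fin d, ((c • A - 1) i j) ^ 2 =
      c ^ 2 * (A i j) ^ 2 - 2 * c * (if i = j then A i j else 0)
        + (if i = j then (1 : ℝ) else 0) := by
    intro i j
    simp only [Matrix.sub_apply, Matrix.smul_apply, Matrix.one_apply, smul_eq_mul]
    split <;> ring
  simp_rw [h, Finset.sum_add_distrib, Finset.sum_sub_distrib, ← Finset.mul_sum,
    Finset.sum_ite_eq, Finset.mem_univ, if_true]
  simp [Matrix.trace, Matrix.diag, Finset.card_univ]

theorem stmt0 {d : ℕ} (A : Matrix (Fin d) (Fin d) ℝ) (hA : A.IsSymm) (hpd : A.PosDef)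
    (μ : ℝ) (hμ0 : 0 ≤ μ) (hμ1 : μ < 1)
    (hC : frobSq A / (Matrix.trace A) ^ 2 ≤ 1 / ((d : ℝ) - μ ^ 2)) :
    Real.sqrt (frobSq ((Matrix.trace A / frobSq A) • A - 1)) ≤ μ := by
  rcases Nat.eq_zero_or_pos d with hd | hd
  · subst hd
    simp [frobSq, Real.sqrt_zero, hμ0]
  · have : Nonempty (Fin d) := ⟨⟨0, hd⟩⟩
    have hdiag : ∀ i, 0 < A i i := by
      intro i
      have h := hpd.dotProduct_mulVec_pos (x := Pi.single i 1) (by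
        simp [Ne, funext_iff, Pi.single_apply])
      simpa [dotProduct, Matrix.mulVec, Pi.single_apply, Finset.sum_ite_eq,
        Finset.mul_sum] using h
    have ht : 0 < Matrix.trace A := by
      have : Matrix.trace A = ∑ i, A i i := rfl
      rw [this]
      exact Finset.sum_pos (fun i _ => hdiag i) Finset.univ_nonempty
    have hF : 0 < frobSq A := by
      have h1 : (A ⟨0, hd⟩ ⟨0, hd⟩) ^ 2 ≤ ∑ j, (A ⟨0, hd⟩ j) ^ 2 :=
        Finset.single_le_sum (f := fun j => (A ⟨0, hd⟩ j) ^ 2)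
          (fun j _ => sq_nonneg _) (Finset.mem_univ _)
      have h2 : ∑ j, (A ⟨0, hd⟩ j) ^ 2 ≤ frobSq A :=
        Finset.single_le_sum (f := fun i => ∑ j, (A i j) ^ 2)
          (fun i _ => Finset.sum_nonneg fun j _ => sq_nonneg _) (Finset.mem_univ _)
      have h0 : (0:ℝ) < (A ⟨0, hd⟩ ⟨0, hd⟩) ^ 2 := by
        have := hdiag ⟨0, hd⟩; positivity
      linarith
    set t := Matrix.trace A with htdef
    set F := frobSq A with hFdef
    have hval : frobSq ((t / F) • A - 1) = (d : ℝ) - t ^ 2 / F := by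
      rw [frob_expand]
      field_simp
      ring
    have hpos : 0 < (d : ℝ) - μ ^ 2 := by
      by_contra hcon
      push_neg at hcon
      have h1 : (1 : ℝ) / ((d : ℝ) - μ ^ 2) ≤ 0 := by
        rcases lt_or_eq_of_le hcon with h | h
        · exact le_of_lt (div_neg_of_pos_of_neg one_pos h)
        · simp [h]
      have h2 : 0 < F / t ^ 2 := by positivity
      linarith [hC.trans h1]
    have hkey : (d : ℝ) - t ^ 2 / F ≤ μ ^ 2 := by
      rw [div_le_div_iff₀ (by positivity) hpos] at hC
      have h3 : (d : ℝ) - μ ^ 2 ≤ t ^ 2 / F := by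
        rw [le_div_iff₀ hF]
        nlinarith
      linarith
    rw [hval]
    calc Real.sqrt ((d : ℝ) - t ^ 2 / F) ≤ Real.sqrt (μ ^ 2) := Real.sqrt_le_sqrt hkey
      _ = μ := Real.sqrt_sq hμ0
end

section
/- Let A be a symmetric positive definite d×d real matrix and 0 ≤ μ < 1. If there exists γ > 0 such that |γA − I_d| ≤ μ (Frobenius norm), then A satisfies the μ-Cordes condition, i.e. |A|²/(tr A)² ≤ 1/(d − μ²). -/
lemma frobSq_nonneg {d : ℕ} (A : Matrix (Fin d) (Fin d) ℝ) : 0 ≤ frobSq A :=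
  Finset.sum_nonneg fun i _ => Finset.sum_nonneg fun j _ => sq_nonneg _

lemma frobSq_expand {d : ℕ} (A : Matrix (Fin d) (Fin d) ℝ) (γ : ℝ) :
    frobSq (γ • A - 1) = γ ^ 2 * frobSq A - 2 * γ * Matrix.trace A + d := by
  unfold frobSq
  have key : ∀ i j : Fin d, (γ * A i j - (1 : Matrix (Fin d) (Fin d) ℝ) i j) ^ 2 =
      γ ^ 2 * (A i j) ^ 2 - 2 * γ * (if j = i then A i i else 0) +
        (if j = i then (1:ℝ) else 0) := by
    intro i j
    by_cases h : i = j <;> simp [Matrix.one_apply, h, eq_comm] <;> ring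
  simp only [Matrix.sub_apply, Matrix.smul_apply, smul_eq_mul, key, Finset.sum_add_distrib,
    Finset.sum_sub_distrib, Finset.sum_ite_eq, Finset.mem_univ, if_true, ← Finset.mul_sum,
    Finset.sum_const, Finset.card_univ, Fintype.card_fin, nsmul_eq_mul, mul_one]
  simp [Matrix.trace, Matrix.diag]

lemma trace_pos {d : ℕ} (hd : 0 < d) (A : Matrix (Fin d) (Fin d) ℝ) (hpd : A.PosDef) :
    0 < Matrix.trace A := by
  have h : ∀ i, 0 < A i i := by
    intro i
    have := hpd.dotProduct_mulVec_pos (x := Pi.single i 1) (fun h => by simpa using congrFun h i)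
    simpa [dotProduct, Matrix.mulVec, Pi.single_apply, Finset.sum_ite_eq] using this
  exact Finset.sum_pos (fun i _ => h i) (by simp [Finset.univ_nonempty_iff, ← Fin.pos_iff_nonempty, hd])

theorem stmt1 {d : ℕ} (hd : 0 < d) (A : Matrix (Fin d) (Fin d) ℝ) (hA : A.IsSymm) (hpd : A.PosDef)
    (μ : ℝ) (hμ0 : 0 ≤ μ) (hμ1 : μ < 1)
    (hγ : ∃ γ : ℝ, 0 < γ ∧ Real.sqrt (frobSq (γ • A - 1)) ≤ μ) :
    frobSq A / (Matrix.trace A) ^ 2 ≤ 1 / ((d : ℝ) - μ ^ 2) := by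
  obtain ⟨γ, hγ0, hsq⟩ := hγ
  have hB : frobSq (γ • A - 1) ≤ μ ^ 2 := by
    have := pow_le_pow_left₀ (Real.sqrt_nonneg _) hsq 2
    rwa [Real.sq_sqrt (frobSq_nonneg _)] at this
  rw [frobSq_expand] at hB
  have ht : 0 < Matrix.trace A := trace_pos hd A hpd
  have ha : 0 ≤ frobSq A := frobSq_nonneg A
  have hc : 0 < (d : ℝ) - μ ^ 2 := by
    have : (1:ℝ) ≤ d := by exact_mod_cast hd
    nlinarith
  rw [div_le_div_iff₀ (by positivity) hc]
  nlinarith [sq_nonneg (γ * frobSq A - Matrix.trace A), mul_nonneg ha (le_of_lt hγ0),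
    mul_le_mul_of_nonneg_left hB ha]
end
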